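/- Let p₁ < p₂, ρ > 1, μ ∈ (0,1]. Let I be an open interval containing [p₁,p₂], p₀ ∈ I \ [p₁,p₂], and ψ ∈ C²(I) with ψ'(p) = |p−p₀|^{ρ−1} ψ̃(p) where |ψ̃| is continuous and nonvanishing on I, and ψ' monotone on [p₁,p₂]. Let U(p) = (p−p₁)^{μ−1} ũ(p) with ũ continuous on [p₁,p₂], differentiable on (p₁,p₂), ũ' ∈ L¹(p₁,p₂). Then for all ω > 0, |∫_{p₁}^{p₂} U(p) e^{iωψ(p)} dp| ≤ C̃ ω^{−μ/ρ}, with C̃ = (2/μ)‖ũ‖_{L^∞} + (4‖ũ‖_{L^∞} + ‖ũ'‖_{L¹}) (min_{[p₁,p₂]} |ψ̃|)^{−1}, uniformly in the position of p₀ outside [p₁,p₂]. -/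

import Mathlib

open MeasureTheory Set intervalIntegral
open scoped NNReal


lemma vdc_recip_diff_le {x y lam : ℝ} (hlam : 0 < lam) (hx : lam ≤ |x|) (hy : lam ≤ |y|)
    (hsign : 0 < x ↔ 0 < y) : |x⁻¹ - y⁻¹| ≤ lam⁻¹ := by
  have key : ∀ u v : ℝ, 0 < u → 0 < v → lam ≤ u → lam ≤ v → |u⁻¹ - v⁻¹| ≤ lam⁻¹ := by
    intro u v hu hv hul hvl
    rw [abs_sub_le_iff]
    constructor
    · have h1 : u⁻¹ ≤ lam⁻¹ := by
        apply inv_anti₀ hlam hul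
      have : (0:ℝ) ≤ v⁻¹ := by positivity
      linarith
    · have h1 : v⁻¹ ≤ lam⁻¹ := by
        apply inv_anti₀ hlam hvl
      have : (0:ℝ) ≤ u⁻¹ := by positivity
      linarith
  rcases lt_or_ge 0 x with hx0 | hx0
  · exact key x y hx0 (hsign.mp hx0) (by rwa [abs_of_pos hx0] at hx)
      (by rwa [abs_of_pos (hsign.mp hx0)] at hy)
  · have hxneg : x < 0 := lt_of_le_of_ne hx0 (by rintro rfl; simp at hx; linarith)
    have hyneg : y < 0 := by
      by_contra hcon
      push_neg at hcon
      have hy0 : 0 < y := lt_of_le_of_ne hcon (by rintro rfl; simp at hy; linarith)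
      exact absurd (hsign.mpr hy0) (not_lt.mpr hx0)
    have := key (-x) (-y) (by linarith) (by linarith)
      (by rwa [abs_of_neg hxneg] at hx) (by rwa [abs_of_neg hyneg] at hy)
    have heq : (-x)⁻¹ - (-y)⁻¹ = -(x⁻¹ - y⁻¹) := by
      simp [inv_neg]; ring
    rwa [heq, abs_neg] at this
  
lemma vdc_deriv_nonneg {f : ℝ → ℝ} {s₁ s₂ x f' : ℝ}
    (hmono : MonotoneOn f (Set.Icc s₁ s₂)) (hx : x ∈ Set.Ioo s₁ s₂)
    (hf : HasDerivAt f f' x) : 0 ≤ f' := by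
  have h := (hf.hasDerivWithinAt (s := Set.Ioi x))
  rw [hasDerivWithinAt_iff_tendsto_slope] at h
  have hne : Set.Ioi x \ {x} = Set.Ioi x := by simp
  rw [hne] at h
  refine ge_of_tendsto h ?_
  filter_upwards [Ioo_mem_nhdsGT_of_mem ⟨le_refl x, hx.2⟩] with y hy
  have hxm : x ∈ Set.Icc s₁ s₂ := ⟨hx.1.le, hx.2.le⟩
  have hym : y ∈ Set.Icc s₁ s₂ := ⟨hx.1.le.trans hy.1.le, hy.2.le⟩
  have hfy : f x ≤ f y := hmono hxm hym hy.1.le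
  have hyx : 0 < y - x := sub_pos.mpr hy.1
  rw [slope_def_field]
  have : 0 ≤ (f y - f x) / (y - x) := div_nonneg (by linarith) hyx.le
  simpa [div_eq_iff] using this

lemma vdc_core (a b : ℝ) (hab : a < b) (ω lam B : ℝ) (hω : 0 < ω) (hlam : 0 < lam)
    (ψ d d2 : ℝ → ℝ)
    (hd : ∀ x ∈ Set.Icc a b, HasDerivAt ψ (d x) x)
    (hd2 : ∀ x ∈ Set.Icc a b, HasDerivAt d (d2 x) x)
    (hd2cont : ContinuousOn d2 (Set.Icc a b))
    (hd2sign : (∀ x ∈ Set.Icc a b, 0 ≤ d2 x) ∨ (∀ x ∈ Set.Icc a b, d2 x ≤ 0))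
    (hdlb : ∀ x ∈ Set.Icc a b, lam ≤ |d x|)
    (f f' : ℝ → ℂ)
    (hf : ∀ x ∈ Set.Icc a b, HasDerivAt f (f' x) x)
    (hf'int : IntervalIntegrable f' MeasureTheory.volume a b)
    (hB : ∀ x ∈ Set.Icc a b, ‖f x‖ ≤ B) :
    ‖∫ p in a..b, f p * Complex.exp (Complex.I * ω * ψ p)‖ ≤
      (ω * lam)⁻¹ * (‖f a‖ + ‖f b‖ + (∫ p in a..b, ‖f' p‖) + B) := by
  have huIcc : Set.uIcc a b = Set.Icc a b := Set.uIcc_of_le hab.le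
  have hΛ : 0 < ω * lam := mul_pos hω hlam
  have hamem : a ∈ Set.Icc a b := Set.left_mem_Icc.mpr hab.le
  have hbmem : b ∈ Set.Icc a b := Set.right_mem_Icc.mpr hab.le
  -- continuity of d and f
  have hdcont : ContinuousOn d (Set.Icc a b) := fun x hx => (hd2 x hx).continuousAt.continuousWithinAt
  have hfcont : ContinuousOn f (Set.Icc a b) := fun x hx => (hf x hx).continuousAt.continuousWithinAt
  have hψcont : ContinuousOn ψ (Set.Icc a b) := fun x hx => (hd x hx).continuousAt.continuousWithinAt
  have hdne : ∀ x ∈ Set.Icc a b, d x ≠ 0 := by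
    intro x hx h0
    have := hdlb x hx
    rw [h0] at this; simp at this; linarith
  -- sign constancy of d
  have hsign : ∀ x ∈ Set.Icc a b, ∀ y ∈ Set.Icc a b, (0 < d x ↔ 0 < d y) := by
    have key : ∀ x ∈ Set.Icc a b, ∀ y ∈ Set.Icc a b, 0 < d x → 0 < d y := by
      intro x hx y hy hdx
      by_contra hcon
      push_neg at hcon
      have hdy : d y < 0 := lt_of_le_of_ne hcon (hdne y hy)
      have hmem : (0:ℝ) ∈ d '' Set.uIcc y x :=
        intermediate_value_uIcc (hdcont.mono (Set.uIcc_subset_Icc hy hx))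
          (by rw [Set.mem_uIcc]; left; exact ⟨hdy.le, hdx.le⟩)
      obtain ⟨c, hc, hc0⟩ := hmem
      exact hdne c (Set.uIcc_subset_Icc hy hx hc) hc0
    intro x hx y hy
    exact ⟨key x hx y hy, key y hy x hx⟩
  -- the functions
  have hinn_norm : ∀ x, ‖Complex.I * ω * (d x : ℂ)‖ = ω * |d x| := by
    intro x
    simp [norm_mul, Complex.norm_real, abs_of_pos hω]
  have hinn_lb : ∀ x ∈ Set.Icc a b, ω * lam ≤ ‖Complex.I * ω * (d x : ℂ)‖ := by
    intro x hx
    rw [hinn_norm]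
    exact mul_le_mul_of_nonneg_left (hdlb x hx) hω.le
  have hinn_ne : ∀ x ∈ Set.Icc a b, Complex.I * ω * (d x : ℂ) ≠ 0 := by
    intro x hx h0
    have := hinn_lb x hx
    rw [h0] at this; simp at this; nlinarith
  set q : ℝ → ℂ := fun x => (Complex.I * ω * (d x : ℂ))⁻¹ with hq_def
  set q' : ℝ → ℂ := fun x => -(Complex.I * ω * (d2 x : ℂ)) / (Complex.I * ω * (d x : ℂ)) ^ 2
    with hq'_def
  set E : ℝ → ℂ := fun x => Complex.exp (Complex.I * ω * (ψ x : ℂ)) with hE_def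
  set E' : ℝ → ℂ := fun x => E x * (Complex.I * ω * (d x : ℂ)) with hE'_def
  set h : ℝ → ℂ := fun x => f x * q x with hh_def
  set H : ℝ → ℂ := fun x => f' x * q x + f x * q' x with hH_def
  have hq_deriv : ∀ x ∈ Set.Icc a b, HasDerivAt q (q' x) x := by
    intro x hx
    have h1 : HasDerivAt (fun y => Complex.I * ω * (d y : ℂ)) (Complex.I * ω * (d2 x : ℂ)) x :=
      ((hd2 x hx).ofReal_comp).const_mul (Complex.I * ω)
    have h2 := HasDerivAt.comp x (hasDerivAt_inv (hinn_ne x hx)) h1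
    have h3 : HasDerivAt (fun y => (Complex.I * ω * (d y : ℂ))⁻¹)
        (-(Complex.I * ω * (d2 x : ℂ)) / (Complex.I * ω * (d x : ℂ)) ^ 2) x := by
      exact h2.congr_deriv (by ring)
    simpa [hq_def, hq'_def] using h3
  have hh_deriv : ∀ x ∈ Set.Icc a b, HasDerivAt h (H x) x := by
    intro x hx
    exact (hf x hx).mul (hq_deriv x hx)
  have hE_deriv : ∀ x ∈ Set.Icc a b, HasDerivAt E (E' x) x := by
    intro x hx
    have h1 : HasDerivAt (fun y => Complex.I * ω * (ψ y : ℂ)) (Complex.I * ω * (d x : ℂ)) x :=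
      ((hd x hx).ofReal_comp).const_mul (Complex.I * ω)
    simpa [hE_def, hE'_def] using h1.cexp
  have hE_norm : ∀ x, ‖E x‖ = 1 := by
    intro x
    rw [hE_def]
    simp only [Complex.norm_exp]
    norm_num [Complex.mul_re]
  -- continuity facts
  have hqcont : ContinuousOn q (Set.Icc a b) := by
    apply ContinuousOn.inv₀
    · exact continuousOn_const.mul (Complex.continuous_ofReal.comp_continuousOn hdcont)
    · exact hinn_ne
  have hq'cont : ContinuousOn q' (Set.Icc a b) := by
    apply ContinuousOn.div
    · exact (continuousOn_const.mul (Complex.continuous_ofReal.comp_continuousOn hd2cont)).neg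
    · exact (continuousOn_const.mul (Complex.continuous_ofReal.comp_continuousOn hdcont)).pow 2
    · intro x hx
      exact pow_ne_zero 2 (hinn_ne x hx)
  have hE'cont : ContinuousOn E' (Set.Icc a b) := by
    apply ContinuousOn.mul
    · exact Complex.continuous_exp.comp_continuousOn
        (continuousOn_const.mul (Complex.continuous_ofReal.comp_continuousOn hψcont))
    · exact continuousOn_const.mul (Complex.continuous_ofReal.comp_continuousOn hdcont)
  have hHint : IntervalIntegrable H MeasureTheory.volume a b := by
    apply IntervalIntegrable.add
    · exact hf'int.mul_continuousOn (huIcc ▸ hqcont)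
    · exact ((hfcont.mul hq'cont).mono huIcc.subset).intervalIntegrable
  have hE'int : IntervalIntegrable E' MeasureTheory.volume a b :=
    (hE'cont.mono huIcc.subset).intervalIntegrable
  -- rewrite integrand
  have heq : ∀ x ∈ Set.uIcc a b, f x * Complex.exp (Complex.I * ω * ψ x) = h x * E' x := by
    intro x hx
    rw [huIcc] at hx
    have hne := hinn_ne x hx
    simp only [hh_def, hE'_def, hq_def, hE_def]
    have hω' : (ω:ℂ) ≠ 0 := by exact_mod_cast hω.ne'
    have hd' : (d x : ℂ) ≠ 0 := by exact_mod_cast hdne x hx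
    field_simp
  rw [intervalIntegral.integral_congr heq]
  -- integration by parts
  have hIBP := intervalIntegral.integral_mul_deriv_eq_deriv_mul
    (u := h) (v := E) (u' := H) (v' := E')
    (fun x hx => hh_deriv x (huIcc ▸ hx)) (fun x hx => hE_deriv x (huIcc ▸ hx)) hHint hE'int
  rw [hIBP]
  -- norm bounds
  have hq_norm : ∀ x ∈ Set.Icc a b, ‖q x‖ ≤ (ω * lam)⁻¹ := by
    intro x hx
    rw [hq_def]
    simp only [norm_inv]
    exact inv_anti₀ hΛ (hinn_lb x hx)
  have hhbd : ∀ x ∈ Set.Icc a b, ‖h x‖ ≤ (ω * lam)⁻¹ * ‖f x‖ := by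
    intro x hx
    calc ‖h x‖ = ‖f x‖ * ‖q x‖ := by simp only [hh_def]; exact norm_mul _ _
    _ ≤ ‖f x‖ * (ω * lam)⁻¹ := mul_le_mul_of_nonneg_left (hq_norm x hx) (norm_nonneg _)
    _ = (ω * lam)⁻¹ * ‖f x‖ := mul_comm _ _
  have hha : ‖h a‖ ≤ (ω * lam)⁻¹ * ‖f a‖ := hhbd a hamem
  have hhb : ‖h b‖ ≤ (ω * lam)⁻¹ * ‖f b‖ := hhbd b hbmem
  -- the q' integral
  have hq'_norm : ∀ x ∈ Set.Icc a b, ‖q' x‖ = |d2 x| / (ω * (d x) ^ 2) := by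
    intro x hx
    rw [hq'_def]
    simp only [norm_div, norm_neg, norm_pow, norm_mul, Complex.norm_I,
      Complex.norm_real, Real.norm_eq_abs, one_mul]
    have hdx : d x ≠ 0 := hdne x hx
    have h1 : (0:ℝ) < (ω * |d x|) ^ 2 := pow_pos (mul_pos hω (abs_pos.mpr hdx)) 2
    have h2 : (0:ℝ) < ω * d x ^ 2 := mul_pos hω (pow_two_pos_of_ne_zero hdx)
    rw [abs_of_pos hω]
    rw [div_eq_div_iff (by positivity) h2.ne']
    rw [mul_pow, sq_abs]
    ring
  -- q' integral bound
  have hrd : ∀ x ∈ Set.Icc a b, HasDerivAt (fun y => (ω * d y)⁻¹) (-(d2 x) / (ω * (d x) ^ 2)) x := by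
    intro x hx
    have h1 : HasDerivAt (fun y => ω * d y) (ω * d2 x) x := (hd2 x hx).const_mul ω
    have hne : ω * d x ≠ 0 := mul_ne_zero hω.ne' (hdne x hx)
    have h2 : HasDerivAt (fun y => (ω * d y)⁻¹) (-(ω * d2 x) / (ω * d x) ^ 2) x := h1.inv hne
    convert h2 using 1
    rw [mul_pow]
    rw [div_eq_div_iff (by nlinarith [pow_two_pos_of_ne_zero (hdne x hx)]) (by nlinarith [pow_two_pos_of_ne_zero hne])]
    ring
  have hrcont : ContinuousOn (fun x => -(d2 x) / (ω * (d x) ^ 2)) (Set.Icc a b) := by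
    apply ContinuousOn.div
    · exact hd2cont.neg
    · exact continuousOn_const.mul ((hdcont.pow 2))
    · intro x hx
      exact mul_ne_zero hω.ne' (pow_ne_zero 2 (hdne x hx))
  have hrint : IntervalIntegrable (fun x => -(d2 x) / (ω * (d x) ^ 2)) MeasureTheory.volume a b :=
    (hrcont.mono huIcc.subset).intervalIntegrable
  have hFTC : ∫ x in a..b, -(d2 x) / (ω * (d x) ^ 2) = (ω * d b)⁻¹ - (ω * d a)⁻¹ :=
    intervalIntegral.integral_eq_sub_of_hasDerivAt (fun x hx => hrd x (huIcc ▸ hx)) hrint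
  have hrecip : |(ω * d a)⁻¹ - (ω * d b)⁻¹| ≤ (ω * lam)⁻¹ := by
    apply vdc_recip_diff_le hΛ
    · rw [abs_mul, abs_of_pos hω]
      exact mul_le_mul_of_nonneg_left (hdlb a hamem) hω.le
    · rw [abs_mul, abs_of_pos hω]
      exact mul_le_mul_of_nonneg_left (hdlb b hbmem) hω.le
    · constructor
      · intro h0
        have hda : 0 < d a := by nlinarith
        have hdb : 0 < d b := (hsign a hamem b hbmem).mp hda
        nlinarith
      · intro h0
        have hdb : 0 < d b := by nlinarith
        have hda : 0 < d a := (hsign a hamem b hbmem).mpr hdb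
        nlinarith
  have hq'int_le : ∫ x in a..b, ‖q' x‖ ≤ (ω * lam)⁻¹ := by
    rcases hd2sign with hpos | hneg
    · have heqn : Set.EqOn (fun x => ‖q' x‖) (fun x => -(-(d2 x) / (ω * (d x) ^ 2))) (Set.uIcc a b) := by
        intro x hx
        rw [huIcc] at hx
        simp only
        rw [hq'_norm x hx, abs_of_nonneg (hpos x hx)]
        ring
      rw [intervalIntegral.integral_congr heqn, intervalIntegral.integral_neg, hFTC]
      have : -((ω * d b)⁻¹ - (ω * d a)⁻¹) = (ω * d a)⁻¹ - (ω * d b)⁻¹ := by ring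
      rw [this]
      exact le_trans (le_abs_self _) hrecip
    · have heqn : Set.EqOn (fun x => ‖q' x‖) (fun x => -(d2 x) / (ω * (d x) ^ 2)) (Set.uIcc a b) := by
        intro x hx
        rw [huIcc] at hx
        simp only
        rw [hq'_norm x hx, abs_of_nonpos (hneg x hx)]
      rw [intervalIntegral.integral_congr heqn, hFTC]
      calc (ω * d b)⁻¹ - (ω * d a)⁻¹ ≤ |(ω * d b)⁻¹ - (ω * d a)⁻¹| := le_abs_self _
      _ = |(ω * d a)⁻¹ - (ω * d b)⁻¹| := abs_sub_comm _ _
      _ ≤ (ω * lam)⁻¹ := hrecip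
  -- now assemble
  have hq'int : IntervalIntegrable (fun x => ‖q' x‖) MeasureTheory.volume a b :=
    ((hq'cont.norm).mono huIcc.subset).intervalIntegrable
  have hHnorm_bound : ∀ x ∈ Set.Icc a b, ‖H x‖ ≤ ‖f' x‖ * (ω * lam)⁻¹ + B * ‖q' x‖ := by
    intro x hx
    have h1 : ‖H x‖ ≤ ‖f' x * q x‖ + ‖f x * q' x‖ := norm_add_le _ _
    have h2 : ‖f' x * q x‖ ≤ ‖f' x‖ * (ω * lam)⁻¹ := by
      rw [norm_mul]
      exact mul_le_mul_of_nonneg_left (hq_norm x hx) (norm_nonneg _)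
    have h3 : ‖f x * q' x‖ ≤ B * ‖q' x‖ := by
      rw [norm_mul]
      exact mul_le_mul_of_nonneg_right (hB x hx) (norm_nonneg _)
    linarith
  have hBnn : (0:ℝ) ≤ B := le_trans (norm_nonneg _) (hB a hamem)
  have hHI : ∫ x in a..b, ‖H x‖ ≤ (∫ x in a..b, ‖f' x‖) * (ω * lam)⁻¹ + B * (ω * lam)⁻¹ := by
    have hmono2 : ∫ x in a..b, ‖H x‖ ≤ ∫ x in a..b, (‖f' x‖ * (ω * lam)⁻¹ + B * ‖q' x‖) := by
      apply intervalIntegral.integral_mono_on hab.le hHint.norm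
      · exact (hf'int.norm.mul_const _).add (hq'int.const_mul B)
      · exact hHnorm_bound
    have hsplit : ∫ x in a..b, (‖f' x‖ * (ω * lam)⁻¹ + B * ‖q' x‖) =
        (∫ x in a..b, ‖f' x‖) * (ω * lam)⁻¹ + B * ∫ x in a..b, ‖q' x‖ := by
      rw [intervalIntegral.integral_add (hf'int.norm.mul_const _) (hq'int.const_mul B),
        intervalIntegral.integral_mul_const, intervalIntegral.integral_const_mul]
    have : B * (∫ x in a..b, ‖q' x‖) ≤ B * (ω * lam)⁻¹ :=
      mul_le_mul_of_nonneg_left hq'int_le hBnn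
    linarith
  -- final
  have hmain : ‖h b * E b - h a * E a - ∫ x in a..b, H x * E x‖ ≤
      ‖h b‖ + ‖h a‖ + ∫ x in a..b, ‖H x‖ := by
    have h1 : ‖h b * E b - h a * E a - ∫ x in a..b, H x * E x‖ ≤
        ‖h b * E b - h a * E a‖ + ‖∫ x in a..b, H x * E x‖ := norm_sub_le _ _
    have h2 : ‖h b * E b - h a * E a‖ ≤ ‖h b * E b‖ + ‖h a * E a‖ := norm_sub_le _ _
    have h3 : ‖h b * E b‖ = ‖h b‖ := by rw [norm_mul, hE_norm, mul_one]
    have h4 : ‖h a * E a‖ = ‖h a‖ := by rw [norm_mul, hE_norm, mul_one]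
    have h5 : ‖∫ x in a..b, H x * E x‖ ≤ ∫ x in a..b, ‖H x‖ := by
      have h6 : (fun x => ‖H x * E x‖) = fun x => ‖H x‖ := by
        funext x; rw [norm_mul, hE_norm, mul_one]
      calc ‖∫ x in a..b, H x * E x‖ ≤ ∫ x in a..b, ‖H x * E x‖ :=
        intervalIntegral.norm_integral_le_integral_norm hab.le
      _ = ∫ x in a..b, ‖H x‖ := by rw [h6]
    linarith
  have hfin : 0 ≤ (ω * lam)⁻¹ := by positivity
  calc ‖h b * E b - h a * E a - ∫ x in a..b, H x * E x‖ ≤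
      ‖h b‖ + ‖h a‖ + ∫ x in a..b, ‖H x‖ := hmain
  _ ≤ (ω * lam)⁻¹ * ‖f b‖ + (ω * lam)⁻¹ * ‖f a‖ +
      ((∫ x in a..b, ‖f' x‖) * (ω * lam)⁻¹ + B * (ω * lam)⁻¹) := by linarith
  _ = (ω * lam)⁻¹ * (‖f a‖ + ‖f b‖ + (∫ x in a..b, ‖f' x‖) + B) := by ring

lemma vdc_rpow_subadd {x y μ : ℝ} (hx : 0 ≤ x) (hy : 0 ≤ y) (h0 : 0 ≤ μ) (h1 : μ ≤ 1) :
    (x + y) ^ μ ≤ x ^ μ + y ^ μ := by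
  have h := NNReal.rpow_add_le_add_rpow (Real.toNNReal x) (Real.toNNReal y) h0 h1
  have hxy : ((Real.toNNReal x + Real.toNNReal y : ℝ≥0) : ℝ) = x + y := by
    push_cast
    rw [Real.coe_toNNReal x hx, Real.coe_toNNReal y hy]
  calc (x + y) ^ μ = (((Real.toNNReal x + Real.toNNReal y : ℝ≥0) : ℝ)) ^ μ := by rw [hxy]
  _ = (((Real.toNNReal x + Real.toNNReal y) ^ μ : ℝ≥0) : ℝ) := by
      rw [← NNReal.coe_rpow]
  _ ≤ ((Real.toNNReal x ^ μ + Real.toNNReal y ^ μ : ℝ≥0) : ℝ) := by exact_mod_cast h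
  _ = x ^ μ + y ^ μ := by
      rw [NNReal.coe_add, NNReal.coe_rpow, NNReal.coe_rpow,
        Real.coe_toNNReal x hx, Real.coe_toNNReal y hy]

set_option maxHeartbeats 2000000 in
theorem vdc_stationary_outside
    (p₁ p₂ : ℝ) (hp : p₁ < p₂) (ρ μ : ℝ) (hρ : 1 < ρ) (hμ : μ ∈ Set.Ioc (0:ℝ) 1)
    (I : Set ℝ) (hIopen : IsOpen I) (hIsub : Set.Icc p₁ p₂ ⊆ I)
    (p₀ : ℝ) (hp₀ : p₀ ∈ I \ Set.Icc p₁ p₂)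
    (ψ : ℝ → ℝ) (ψt : ℝ → ℝ)
    (hψ : ContDiffOn ℝ 2 ψ I)
    (hfact : ∀ p ∈ I, deriv ψ p = |p - p₀| ^ (ρ - 1) * ψt p)
    (hψtcont : ContinuousOn (fun p => |ψt p|) I)
    (hψtne : ∀ p ∈ I, ψt p ≠ 0)
    (hmono : MonotoneOn (deriv ψ) (Set.Icc p₁ p₂) ∨
      AntitoneOn (deriv ψ) (Set.Icc p₁ p₂))
    (m : ℝ) (hm : 0 < m)
    (hmin : IsLeast ((fun p => |ψt p|) '' Set.Icc p₁ p₂) m)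
    (ut : ℝ → ℂ)
    (hcont : ContinuousOn ut (Set.Icc p₁ p₂))
    (hdiff : ∀ p ∈ Set.Ioo p₁ p₂, DifferentiableAt ℝ ut p)
    (hint : IntervalIntegrable (fun p => ‖deriv ut p‖) MeasureTheory.volume p₁ p₂)
    (U : ℝ → ℂ)
    (hU : ∀ p ∈ Set.Ioc p₁ p₂, U p = (((p - p₁) ^ (μ - 1) : ℝ) : ℂ) * ut p) :
    ∀ ω : ℝ, 0 < ω →
      ‖∫ p in p₁..p₂, U p * Complex.exp (Complex.I * ω * ψ p)‖ ≤
        ((2 / μ) * (⨆ p : Set.Icc p₁ p₂, ‖ut (p : ℝ)‖) +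
          (4 * (⨆ p : Set.Icc p₁ p₂, ‖ut (p : ℝ)‖) +
            ∫ p in p₁..p₂, ‖deriv ut p‖) * m⁻¹) * ω ^ (-(μ / ρ)) := by
  intro ω hω
  obtain ⟨hμ0, hμ1⟩ := hμ
  have hρ0 : 0 < ρ := lt_trans one_pos hρ
  set M := ⨆ p : Set.Icc p₁ p₂, ‖ut (p : ℝ)‖ with hM_def
  set V := ∫ p in p₁..p₂, ‖deriv ut p‖ with hV_def
  have hMb : ∀ p ∈ Set.Icc p₁ p₂, ‖ut p‖ ≤ M := by
    intro p hp'
    have hbdd : BddAbove (Set.range fun p : Set.Icc p₁ p₂ => ‖ut (p : ℝ)‖) := by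
      have hsub : Set.range (fun p : Set.Icc p₁ p₂ => ‖ut (p : ℝ)‖) ⊆
          (fun p => ‖ut p‖) '' Set.Icc p₁ p₂ := by
        rintro z ⟨q, rfl⟩
        exact ⟨q, q.2, rfl⟩
      exact ((isCompact_Icc.image_of_continuousOn hcont.norm).bddAbove).mono hsub
    exact le_ciSup hbdd ⟨p, hp'⟩
  have hM0 : 0 ≤ M := le_trans (norm_nonneg _) (hMb p₁ ⟨le_refl _, hp.le⟩)
  have hV0 : 0 ≤ V := intervalIntegral.integral_nonneg hp.le (fun x _ => norm_nonneg _)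
  set δ := ω ^ (-ρ⁻¹) with hδ_def
  have hδ : 0 < δ := Real.rpow_pos_of_pos hω _
  have hδμ : δ ^ μ = ω ^ (-(μ / ρ)) := by
    rw [hδ_def, ← Real.rpow_mul hω.le]
    congr 1
    field_simp
  -- exp norm
  have hexp1 : ∀ p : ℝ, ‖Complex.exp (Complex.I * ω * (ψ p : ℂ))‖ = 1 := by
    intro p
    simp only [Complex.norm_exp]
    norm_num [Complex.mul_re]
  -- G
  set G : ℝ → ℂ := fun p => (((p - p₁) ^ (μ - 1) : ℝ) : ℂ) * ut p *
    Complex.exp (Complex.I * ω * ψ p) with hG_def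
  have hstep1 : ∫ p in p₁..p₂, U p * Complex.exp (Complex.I * ω * ψ p) = ∫ p in p₁..p₂, G p := by
    apply intervalIntegral.integral_congr_ae
    apply MeasureTheory.ae_of_all
    intro x hx
    rw [Set.uIoc_of_le hp.le] at hx
    rw [hU x hx, hG_def]
  rw [hstep1]
  -- continuity
  have hψcont : ContinuousOn ψ (Set.Icc p₁ p₂) := (hψ.continuousOn).mono hIsub
  have hecont : ContinuousOn (fun p => Complex.exp (Complex.I * ω * (ψ p : ℂ))) (Set.Icc p₁ p₂) :=
    Complex.continuous_exp.comp_continuousOn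
      (continuousOn_const.mul (Complex.continuous_ofReal.comp_continuousOn hψcont))
  have hgcontIoc : ContinuousOn (fun p : ℝ => (p - p₁) ^ (μ - 1)) (Set.Ioc p₁ p₂) := by
    apply ContinuousOn.rpow_const
    · exact (continuous_id.sub continuous_const).continuousOn
    · intro x hx
      exact Or.inl (ne_of_gt (sub_pos.mpr hx.1))
  have hGcontIoc : ContinuousOn G (Set.Ioc p₁ p₂) := by
    rw [hG_def]
    exact ((Complex.continuous_ofReal.comp_continuousOn hgcontIoc).mul
      (hcont.mono Set.Ioc_subset_Icc_self)).mul (hecont.mono Set.Ioc_subset_Icc_self)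
  -- integrability of gR and G
  have hgint : IntervalIntegrable (fun p : ℝ => (p - p₁) ^ (μ - 1)) MeasureTheory.volume p₁ p₂ := by
    have h1 : IntervalIntegrable (fun x : ℝ => x ^ (μ - 1)) MeasureTheory.volume 0 (p₂ - p₁) :=
      intervalIntegrable_rpow' (by linarith)
    have h2 := h1.comp_sub_right p₁
    simpa using h2
  have hMg_int : IntervalIntegrable (fun p : ℝ => M * (p - p₁) ^ (μ - 1))
      MeasureTheory.volume p₁ p₂ := hgint.const_mul M
  have hGnorm : ∀ p ∈ Set.Icc p₁ p₂, ‖G p‖ ≤ M * (p - p₁) ^ (μ - 1) := by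
    intro p hp'
    have hg0 : (0:ℝ) ≤ (p - p₁) ^ (μ - 1) := Real.rpow_nonneg (by linarith [hp'.1]) _
    calc ‖G p‖ = |(p - p₁) ^ (μ - 1)| * ‖ut p‖ := by
          rw [hG_def]
          simp only
          rw [norm_mul, norm_mul, hexp1, mul_one, Complex.norm_real, Real.norm_eq_abs]
    _ = (p - p₁) ^ (μ - 1) * ‖ut p‖ := by rw [abs_of_nonneg hg0]
    _ ≤ (p - p₁) ^ (μ - 1) * M := mul_le_mul_of_nonneg_left (hMb p hp') hg0
    _ = M * (p - p₁) ^ (μ - 1) := mul_comm _ _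
  have hGint : IntervalIntegrable G MeasureTheory.volume p₁ p₂ := by
    rw [intervalIntegrable_iff_integrableOn_Ioc_of_le hp.le]
    apply MeasureTheory.Integrable.mono'
      ((intervalIntegrable_iff_integrableOn_Ioc_of_le hp.le).mp hMg_int)
      (hGcontIoc.aestronglyMeasurable measurableSet_Ioc)
    rw [MeasureTheory.ae_restrict_iff' measurableSet_Ioc]
    exact MeasureTheory.ae_of_all _ (fun x hx => hGnorm x (Set.Ioc_subset_Icc_self hx))
  -- split points
  set a := min (p₁ + δ) p₂ with ha_def
  set b := max (p₂ - δ) a with hb_def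
  have hpa : p₁ ≤ a := le_min (by linarith) hp.le
  have hab : a ≤ b := le_max_right _ _
  have hbp : b ≤ p₂ := max_le (by linarith) (min_le_right _ _)
  have hadelta : a - p₁ ≤ δ := by
    have := min_le_left (p₁ + δ) p₂
    have h2 : a ≤ p₁ + δ := this
    linarith
  have hbdelta : p₂ - b ≤ δ := by
    have h2 : p₂ - δ ≤ b := le_max_left _ _
    linarith
  -- end piece estimate
  have hend : ∀ c e : ℝ, p₁ ≤ c → c ≤ e → e ≤ p₂ → e - c ≤ δ →
      ‖∫ p in c..e, G p‖ ≤ M * δ ^ μ / μ := by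
    intro c e hc hce hep hde
    have hsub : Set.uIcc c e ⊆ Set.uIcc p₁ p₂ := by
      rw [Set.uIcc_of_le hce, Set.uIcc_of_le hp.le]
      exact Set.Icc_subset_Icc hc hep
    have hGint' := hGint.mono_set hsub
    have hMgint' := hMg_int.mono_set hsub
    have hcalc : ∫ p in c..e, M * (p - p₁) ^ (μ - 1) =
        M * (((e - p₁) ^ μ - (c - p₁) ^ μ) / μ) := by
      rw [intervalIntegral.integral_const_mul]
      congr 1
      have h1 : (∫ p in c..e, (p - p₁) ^ (μ - 1)) = ∫ x in (c - p₁)..(e - p₁), x ^ (μ - 1) :=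
        integral_comp_sub_right (fun x => x ^ (μ - 1)) p₁
      rw [h1, integral_rpow (Or.inl (by linarith : (-1:ℝ) < μ - 1))]
      have h2 : μ - 1 + 1 = μ := by ring
      rw [h2]
    have hsubadd : (e - p₁) ^ μ - (c - p₁) ^ μ ≤ δ ^ μ := by
      have key := vdc_rpow_subadd (x := c - p₁) (y := e - c) (by linarith) (by linarith)
        hμ0.le hμ1
      have h3 : c - p₁ + (e - c) = e - p₁ := by ring
      rw [h3] at key
      have h4 : (e - c) ^ μ ≤ δ ^ μ := Real.rpow_le_rpow (by linarith) hde hμ0.le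
      linarith
    calc ‖∫ p in c..e, G p‖ ≤ ∫ p in c..e, ‖G p‖ :=
        intervalIntegral.norm_integral_le_integral_norm hce
    _ ≤ ∫ p in c..e, M * (p - p₁) ^ (μ - 1) := by
        apply intervalIntegral.integral_mono_on hce hGint'.norm hMgint'
        intro x hx
        exact hGnorm x ⟨le_trans hc hx.1, le_trans hx.2 hep⟩
    _ = M * (((e - p₁) ^ μ - (c - p₁) ^ μ) / μ) := hcalc
    _ ≤ M * (δ ^ μ / μ) := by
        apply mul_le_mul_of_nonneg_left _ hM0
        exact (div_le_div_iff_of_pos_right hμ0).mpr hsubadd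
    _ = M * δ ^ μ / μ := by ring
  -- derivative machinery on I
  have hψdiff : ∀ x ∈ I, HasDerivAt ψ (deriv ψ x) x := by
    intro x hx
    exact ((hψ.differentiableOn (by norm_num) x hx).differentiableAt
      (hIopen.mem_nhds hx)).hasDerivAt
  have hd1 : ContDiffOn ℝ 1 (deriv ψ) I := hψ.deriv_of_isOpen hIopen (by norm_num)
  have hd2diff : ∀ x ∈ I, HasDerivAt (deriv ψ) (deriv (deriv ψ) x) x := by
    intro x hx
    exact ((hd1.differentiableOn (by norm_num) x hx).differentiableAt
      (hIopen.mem_nhds hx)).hasDerivAt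
  have hd2cont : ContinuousOn (deriv (deriv ψ)) I :=
    hd1.continuousOn_deriv_of_isOpen hIopen le_rfl
  -- middle piece
  have hmiddle : ‖∫ p in a..b, G p‖ ≤ (4 * M + V) * m⁻¹ * ω ^ (-(μ / ρ)) := by
    rcases eq_or_lt_of_le hab with heq | hlt
    · rw [← heq, intervalIntegral.integral_same, norm_zero]
      apply mul_nonneg (mul_nonneg (by linarith) (inv_nonneg.mpr hm.le))
        (Real.rpow_nonneg hω.le _)
    · have hap : a = p₁ + δ := by
        rcases le_or_gt (p₁ + δ) p₂ with h | h
        · exact min_eq_left h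
        · exfalso
          have ha2 : a = p₂ := min_eq_right h.le
          have hb2 : b ≤ p₂ := hbp
          rw [ha2] at hlt
          linarith
      have hbq : b = p₂ - δ := by
        rcases le_or_gt a (p₂ - δ) with h | h
        · exact max_eq_left h
        · exfalso
          have hb2 : b = a := max_eq_right h.le
          rw [hb2] at hlt
          exact lt_irrefl a hlt
      have hIoo : Set.Icc a b ⊆ Set.Ioo p₁ p₂ := by
        intro x hx
        constructor
        · have := hx.1; rw [hap] at this; linarith
        · have := hx.2; rw [hbq] at this; linarith
      have hIccsub : Set.Icc a b ⊆ Set.Icc p₁ p₂ := hIoo.trans Set.Ioo_subset_Icc_self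
      have hIsub2 : Set.Icc a b ⊆ I := hIccsub.trans hIsub
      -- sign of second derivative
      have hd2sign : (∀ x ∈ Set.Icc a b, 0 ≤ deriv (deriv ψ) x) ∨
          (∀ x ∈ Set.Icc a b, deriv (deriv ψ) x ≤ 0) := by
        rcases hmono with hm1 | hm1
        · left
          intro x hx
          exact vdc_deriv_nonneg hm1 (hIoo hx) (hd2diff x (hIsub2 hx))
        · right
          intro x hx
          have h1 := vdc_deriv_nonneg hm1.neg (hIoo hx) ((hd2diff x (hIsub2 hx)).neg)
          linarith
      -- lower bound on |deriv ψ|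
      set lam := m * δ ^ (ρ - 1) with hlam_def
      have hlam : 0 < lam := mul_pos hm (Real.rpow_pos_of_pos hδ _)
      have hdlb : ∀ x ∈ Set.Icc a b, lam ≤ |deriv ψ x| := by
        intro x hx
        have hxI : x ∈ I := hIsub2 hx
        have hdist : δ ≤ |x - p₀| := by
          have hout := hp₀.2
          rw [Set.mem_Icc] at hout
          push_neg at hout
          rcases lt_or_ge p₀ p₁ with hcase | hcase
          · have hx1 : p₁ + δ ≤ x := by rw [← hap]; exact hx.1
            have h5 : δ ≤ x - p₀ := by linarith
            exact le_trans h5 (le_abs_self _)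
          · have hp2 : p₂ < p₀ := hout hcase
            have hx2 : x ≤ p₂ - δ := by rw [← hbq]; exact hx.2
            have h5 : δ ≤ -(x - p₀) := by linarith
            exact le_trans h5 (neg_le_abs _)
        have h1 : δ ^ (ρ - 1) ≤ |x - p₀| ^ (ρ - 1) :=
          Real.rpow_le_rpow hδ.le hdist (by linarith)
        have h2 : m ≤ |ψt x| := hmin.2 (Set.mem_image_of_mem _ (hIccsub hx))
        have habs : |deriv ψ x| = |x - p₀| ^ (ρ - 1) * |ψt x| := by
          rw [hfact x hxI, abs_mul, abs_of_nonneg (Real.rpow_nonneg (abs_nonneg _) _)]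
        rw [habs, hlam_def]
        calc m * δ ^ (ρ - 1) = δ ^ (ρ - 1) * m := mul_comm _ _
        _ ≤ |x - p₀| ^ (ρ - 1) * |ψt x| :=
            mul_le_mul h1 h2 hm.le (Real.rpow_nonneg (abs_nonneg _) _)
      -- amplitude
      set fA : ℝ → ℂ := fun p => (((p - p₁) ^ (μ - 1) : ℝ) : ℂ) * ut p with hfA_def
      set fA' : ℝ → ℂ := fun p => (((μ - 1) * (p - p₁) ^ (μ - 2) : ℝ) : ℂ) * ut p +
        (((p - p₁) ^ (μ - 1) : ℝ) : ℂ) * deriv ut p with hfA'_def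
      have hgderiv : ∀ x ∈ Set.Icc a b,
          HasDerivAt (fun p : ℝ => (p - p₁) ^ (μ - 1)) ((μ - 1) * (x - p₁) ^ (μ - 2)) x := by
        intro x hx
        have hxpos : 0 < x - p₁ := sub_pos.mpr (hIoo hx).1
        have h1 := Real.hasDerivAt_rpow_const (x := x - p₁) (p := μ - 1) (Or.inl hxpos.ne')
        have h2 := h1.comp x ((hasDerivAt_id x).sub_const p₁)
        have h3 : μ - 1 - 1 = μ - 2 := by ring
        rw [h3, mul_one] at h2
        exact h2
      have hfderiv : ∀ x ∈ Set.Icc a b, HasDerivAt fA (fA' x) x := by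
        intro x hx
        have hg2 : HasDerivAt (fun p : ℝ => ((((p - p₁) ^ (μ - 1) : ℝ)) : ℂ))
            ((((μ - 1) * (x - p₁) ^ (μ - 2) : ℝ)) : ℂ) x := (hgderiv x hx).ofReal_comp
        have hut : HasDerivAt ut (deriv ut x) x := (hdiff x (hIoo hx)).hasDerivAt
        exact hg2.mul hut
      -- integrability of deriv ut and fA'
      have hderiv_int : IntervalIntegrable (deriv ut) MeasureTheory.volume p₁ p₂ := by
        rw [intervalIntegrable_iff_integrableOn_Ioc_of_le hp.le] at hint ⊢
        exact (MeasureTheory.integrable_norm_iff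
          ((measurable_deriv ut).aestronglyMeasurable.restrict)).mp hint
      have hsubab : Set.uIcc a b ⊆ Set.uIcc p₁ p₂ := by
        rw [Set.uIcc_of_le hab, Set.uIcc_of_le hp.le]
        exact Set.Icc_subset_Icc hpa hbp
      have hderiv_int' : IntervalIntegrable (deriv ut) MeasureTheory.volume a b :=
        hderiv_int.mono_set hsubab
      have huIccab : Set.uIcc a b = Set.Icc a b := Set.uIcc_of_le hab
      have hgcont_ab : ContinuousOn (fun p : ℝ => (((p - p₁) ^ (μ - 1) : ℝ) : ℂ))
          (Set.uIcc a b) := by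
        apply Complex.continuous_ofReal.comp_continuousOn
        rw [huIccab]
        exact hgcontIoc.mono (fun x hx => ⟨(hIoo hx).1, hx.2.trans hbp⟩)
      have hfA'int : IntervalIntegrable fA' MeasureTheory.volume a b := by
        apply IntervalIntegrable.add
        · apply ContinuousOn.intervalIntegrable
          apply ContinuousOn.mul
          · apply Complex.continuous_ofReal.comp_continuousOn
            apply ContinuousOn.mul continuousOn_const
            apply ContinuousOn.rpow_const
              ((continuous_id.sub continuous_const).continuousOn)
            intro x hx
            rw [huIccab] at hx
            exact Or.inl (ne_of_gt (sub_pos.mpr (hIoo hx).1))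
          · rw [huIccab]
            exact hcont.mono hIccsub
        · exact hderiv_int'.continuousOn_mul hgcont_ab
      -- bound on fA
      have hBbd : ∀ x ∈ Set.Icc a b, ‖fA x‖ ≤ M * δ ^ (μ - 1) := by
        intro x hx
        have hd0 : 0 < x - p₁ := sub_pos.mpr (hIoo hx).1
        have hxa : δ ≤ x - p₁ := by
          have := hx.1; rw [hap] at this; linarith
        have hgle : (x - p₁) ^ (μ - 1) ≤ δ ^ (μ - 1) :=
          Real.rpow_le_rpow_of_nonpos hδ hxa (by linarith)
        calc ‖fA x‖ = |(x - p₁) ^ (μ - 1)| * ‖ut x‖ := by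
              rw [hfA_def]
              simp only
              rw [norm_mul, Complex.norm_real, Real.norm_eq_abs]
        _ = (x - p₁) ^ (μ - 1) * ‖ut x‖ := by
              rw [abs_of_nonneg (Real.rpow_nonneg hd0.le _)]
        _ ≤ δ ^ (μ - 1) * M :=
              mul_le_mul hgle (hMb x (hIccsub hx)) (norm_nonneg _) (Real.rpow_nonneg hδ.le _)
        _ = M * δ ^ (μ - 1) := mul_comm _ _
      -- the core estimate
      have hGfA : Set.EqOn G (fun p => fA p * Complex.exp (Complex.I * ω * ψ p))
          (Set.uIcc a b) := by
        intro x _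
        rw [hG_def, hfA_def]
      have hcore := vdc_core a b hlt ω lam (M * δ ^ (μ - 1)) hω hlam ψ (deriv ψ)
        (deriv (deriv ψ)) (fun x hx => hψdiff x (hIsub2 hx)) (fun x hx => hd2diff x (hIsub2 hx))
        (hd2cont.mono hIsub2) hd2sign hdlb fA fA' hfderiv hfA'int hBbd
      rw [intervalIntegral.integral_congr hGfA]
      -- bound the f' integral
      have hFTC2 : ∫ x in a..b, (1 - μ) * (x - p₁) ^ (μ - 2) =
          (a - p₁) ^ (μ - 1) - (b - p₁) ^ (μ - 1) := by
        have hder : ∀ x ∈ Set.uIcc a b,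
            HasDerivAt (fun y : ℝ => -((y - p₁) ^ (μ - 1))) ((1 - μ) * (x - p₁) ^ (μ - 2)) x := by
          intro x hx
          rw [huIccab] at hx
          have h1 := (hgderiv x hx).neg
          have h2 : -((μ - 1) * (x - p₁) ^ (μ - 2)) = (1 - μ) * (x - p₁) ^ (μ - 2) := by ring
          rwa [h2] at h1
        have hcont2 : ContinuousOn (fun x : ℝ => (1 - μ) * (x - p₁) ^ (μ - 2)) (Set.uIcc a b) := by
          apply ContinuousOn.mul continuousOn_const
          apply ContinuousOn.rpow_const ((continuous_id.sub continuous_const).continuousOn)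
          intro x hx
          rw [huIccab] at hx
          exact Or.inl (ne_of_gt (sub_pos.mpr (hIoo hx).1))
        have h3 := intervalIntegral.integral_eq_sub_of_hasDerivAt
          (f := fun y : ℝ => -((y - p₁) ^ (μ - 1)))
          (f' := fun x : ℝ => (1 - μ) * (x - p₁) ^ (μ - 2))
          (fun x hx => hder x hx) (hcont2.intervalIntegrable)
        rw [h3]
        ring
      have hVsub : ∫ x in a..b, ‖deriv ut x‖ ≤ V := by
        have hi1 := hint.mono_set (show Set.uIcc p₁ a ⊆ Set.uIcc p₁ p₂ by
          rw [Set.uIcc_of_le hpa, Set.uIcc_of_le hp.le]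
          exact Set.Icc_subset_Icc le_rfl (hab.trans hbp))
        have hi2 := hint.mono_set hsubab
        have hi3 := hint.mono_set (show Set.uIcc b p₂ ⊆ Set.uIcc p₁ p₂ by
          rw [Set.uIcc_of_le hbp, Set.uIcc_of_le hp.le]
          exact Set.Icc_subset_Icc (hpa.trans hab) le_rfl)
        have e2 : (∫ x in a..b, ‖deriv ut x‖) + (∫ x in b..p₂, ‖deriv ut x‖)
            = ∫ x in a..p₂, ‖deriv ut x‖ :=
          intervalIntegral.integral_add_adjacent_intervals hi2 hi3
        have e1 : (∫ x in p₁..a, ‖deriv ut x‖) + (∫ x in a..p₂, ‖deriv ut x‖)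
            = ∫ x in p₁..p₂, ‖deriv ut x‖ :=
          intervalIntegral.integral_add_adjacent_intervals hi1 (hi2.trans hi3)
        have n1 : 0 ≤ ∫ x in p₁..a, ‖deriv ut x‖ :=
          intervalIntegral.integral_nonneg hpa (fun x _ => norm_nonneg _)
        have n3 : 0 ≤ ∫ x in b..p₂, ‖deriv ut x‖ :=
          intervalIntegral.integral_nonneg hbp (fun x _ => norm_nonneg _)
        rw [hV_def]
        linarith
      have hf'le : ∫ x in a..b, ‖fA' x‖ ≤ M * δ ^ (μ - 1) + δ ^ (μ - 1) * V := by
        have hptw : ∀ x ∈ Set.Icc a b,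
            ‖fA' x‖ ≤ M * ((1 - μ) * (x - p₁) ^ (μ - 2)) + δ ^ (μ - 1) * ‖deriv ut x‖ := by
          intro x hx
          have hd0 : 0 < x - p₁ := sub_pos.mpr (hIoo hx).1
          have hxa : δ ≤ x - p₁ := by
            have := hx.1; rw [hap] at this; linarith
          have hgle : (x - p₁) ^ (μ - 1) ≤ δ ^ (μ - 1) :=
            Real.rpow_le_rpow_of_nonpos hδ hxa (by linarith)
          have h1 : ‖fA' x‖ ≤ ‖(((μ - 1) * (x - p₁) ^ (μ - 2) : ℝ) : ℂ) * ut x‖ +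
              ‖(((x - p₁) ^ (μ - 1) : ℝ) : ℂ) * deriv ut x‖ := by
            rw [hfA'_def]
            exact norm_add_le _ _
          have h2 : ‖(((μ - 1) * (x - p₁) ^ (μ - 2) : ℝ) : ℂ) * ut x‖ ≤
              M * ((1 - μ) * (x - p₁) ^ (μ - 2)) := by
            rw [norm_mul, Complex.norm_real, Real.norm_eq_abs, abs_mul]
            have e3 : |μ - 1| = 1 - μ := by rw [abs_of_nonpos (by linarith)]; ring
            have e4 : |(x - p₁) ^ (μ - 2)| = (x - p₁) ^ (μ - 2) :=
              abs_of_nonneg (Real.rpow_nonneg hd0.le _)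
            rw [e3, e4]
            calc (1 - μ) * (x - p₁) ^ (μ - 2) * ‖ut x‖ ≤
                (1 - μ) * (x - p₁) ^ (μ - 2) * M :=
                mul_le_mul_of_nonneg_left (hMb x (hIccsub hx))
                  (mul_nonneg (by linarith) (Real.rpow_nonneg hd0.le _))
            _ = M * ((1 - μ) * (x - p₁) ^ (μ - 2)) := by ring
          have h3 : ‖(((x - p₁) ^ (μ - 1) : ℝ) : ℂ) * deriv ut x‖ ≤
              δ ^ (μ - 1) * ‖deriv ut x‖ := by
            rw [norm_mul, Complex.norm_real, Real.norm_eq_abs,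
              abs_of_nonneg (Real.rpow_nonneg hd0.le _)]
            exact mul_le_mul_of_nonneg_right hgle (norm_nonneg _)
          linarith
        have hint_rhs : IntervalIntegrable
            (fun x => M * ((1 - μ) * (x - p₁) ^ (μ - 2)) + δ ^ (μ - 1) * ‖deriv ut x‖)
            MeasureTheory.volume a b := by
          apply IntervalIntegrable.add
          · apply ContinuousOn.intervalIntegrable
            apply ContinuousOn.mul continuousOn_const
            apply ContinuousOn.mul continuousOn_const
            apply ContinuousOn.rpow_const ((continuous_id.sub continuous_const).continuousOn)
            intro x hx
            rw [huIccab] at hx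
            exact Or.inl (ne_of_gt (sub_pos.mpr (hIoo hx).1))
          · exact (hint.mono_set hsubab).const_mul _
        have hmono3 : ∫ x in a..b, ‖fA' x‖ ≤
            ∫ x in a..b, (M * ((1 - μ) * (x - p₁) ^ (μ - 2)) + δ ^ (μ - 1) * ‖deriv ut x‖) := by
          apply intervalIntegral.integral_mono_on hab hfA'int.norm hint_rhs hptw
        have hsplit2 : ∫ x in a..b,
            (M * ((1 - μ) * (x - p₁) ^ (μ - 2)) + δ ^ (μ - 1) * ‖deriv ut x‖) =
            M * ((a - p₁) ^ (μ - 1) - (b - p₁) ^ (μ - 1)) +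
              δ ^ (μ - 1) * ∫ x in a..b, ‖deriv ut x‖ := by
          rw [intervalIntegral.integral_add]
          · rw [intervalIntegral.integral_const_mul, hFTC2, intervalIntegral.integral_const_mul]
          · apply ContinuousOn.intervalIntegrable
            apply ContinuousOn.mul continuousOn_const
            apply ContinuousOn.mul continuousOn_const
            apply ContinuousOn.rpow_const ((continuous_id.sub continuous_const).continuousOn)
            intro x hx
            rw [huIccab] at hx
            exact Or.inl (ne_of_gt (sub_pos.mpr (hIoo hx).1))
          · exact (hint.mono_set hsubab).const_mul _
        have hgb0 : 0 ≤ (b - p₁) ^ (μ - 1) := Real.rpow_nonneg (by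
          have := hIoo (Set.right_mem_Icc.mpr hab); linarith [this.1]) _
        have hga : (a - p₁) ^ (μ - 1) = δ ^ (μ - 1) := by rw [hap]; ring_nf
        have hd' : 0 ≤ δ ^ (μ - 1) := Real.rpow_nonneg hδ.le _
        have hVab : δ ^ (μ - 1) * (∫ x in a..b, ‖deriv ut x‖) ≤ δ ^ (μ - 1) * V :=
          mul_le_mul_of_nonneg_left hVsub hd'
        rw [hsplit2] at hmono3
        rw [hga] at hmono3
        nlinarith [hM0]
      -- final algebra for middle
      have hkey : (ω * lam)⁻¹ * δ ^ (μ - 1) = m⁻¹ * ω ^ (-(μ / ρ)) := by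
        rw [hlam_def]
        have e1 : δ ^ (μ - 1) = δ ^ (μ - ρ) * δ ^ (ρ - 1) := by
          rw [← Real.rpow_add hδ]
          congr 1
          ring
        have e2 : δ ^ (μ - ρ) = ω * ω ^ (-(μ / ρ)) := by
          rw [hδ_def, ← Real.rpow_mul hω.le]
          rw [show -ρ⁻¹ * (μ - ρ) = 1 + -(μ / ρ) by field_simp; ring]
          rw [Real.rpow_add hω, Real.rpow_one]
        rw [e1, e2]
        have hδρ : (0:ℝ) < δ ^ (ρ - 1) := Real.rpow_pos_of_pos hδ _
        field_simp
      have hBa : ‖fA a‖ ≤ M * δ ^ (μ - 1) := hBbd a (Set.left_mem_Icc.mpr hab)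
      have hBb : ‖fA b‖ ≤ M * δ ^ (μ - 1) := hBbd b (Set.right_mem_Icc.mpr hab)
      have hd' : 0 ≤ δ ^ (μ - 1) := Real.rpow_nonneg hδ.le _
      have hinv0 : 0 ≤ (ω * lam)⁻¹ := inv_nonneg.mpr (mul_pos hω hlam).le
      calc ‖∫ p in a..b, fA p * Complex.exp (Complex.I * ω * ψ p)‖ ≤
          (ω * lam)⁻¹ * (‖fA a‖ + ‖fA b‖ + (∫ p in a..b, ‖fA' p‖) + M * δ ^ (μ - 1)) := hcore
      _ ≤ (ω * lam)⁻¹ * (δ ^ (μ - 1) * (4 * M + V)) := by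
          apply mul_le_mul_of_nonneg_left _ hinv0
          nlinarith
      _ = ((ω * lam)⁻¹ * δ ^ (μ - 1)) * (4 * M + V) := by ring
      _ = m⁻¹ * ω ^ (-(μ / ρ)) * (4 * M + V) := by rw [hkey]
      _ = (4 * M + V) * m⁻¹ * ω ^ (-(μ / ρ)) := by ring
  -- combine the three pieces
  have hIab1 : IntervalIntegrable G MeasureTheory.volume p₁ a :=
    hGint.mono_set (by
      rw [Set.uIcc_of_le hpa, Set.uIcc_of_le hp.le]
      exact Set.Icc_subset_Icc le_rfl (hab.trans hbp))
  have hIab2 : IntervalIntegrable G MeasureTheory.volume a b :=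
    hGint.mono_set (by
      rw [Set.uIcc_of_le hab, Set.uIcc_of_le hp.le]
      exact Set.Icc_subset_Icc hpa hbp)
  have hIab3 : IntervalIntegrable G MeasureTheory.volume b p₂ :=
    hGint.mono_set (by
      rw [Set.uIcc_of_le hbp, Set.uIcc_of_le hp.le]
      exact Set.Icc_subset_Icc (hpa.trans hab) le_rfl)
  have hsplitG : ∫ p in p₁..p₂, G p =
      (∫ p in p₁..a, G p) + (∫ p in a..b, G p) + (∫ p in b..p₂, G p) := by
    have e2 : (∫ p in a..b, G p) + (∫ p in b..p₂, G p) = ∫ p in a..p₂, G p :=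
      intervalIntegral.integral_add_adjacent_intervals hIab2 hIab3
    have e1 : (∫ p in p₁..a, G p) + (∫ p in a..p₂, G p) = ∫ p in p₁..p₂, G p :=
      intervalIntegral.integral_add_adjacent_intervals hIab1 (hIab2.trans hIab3)
    rw [← e1, ← e2]
    ring
  rw [hsplitG]
  have h1 := hend p₁ a le_rfl hpa (hab.trans hbp) (by linarith)
  have h3 := hend b p₂ (hpa.trans hab) hbp le_rfl (by linarith)
  calc ‖(∫ p in p₁..a, G p) + (∫ p in a..b, G p) + (∫ p in b..p₂, G p)‖ ≤
      ‖∫ p in p₁..a, G p‖ + ‖∫ p in a..b, G p‖ + ‖∫ p in b..p₂, G p‖ := norm_add₃_le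
  _ ≤ M * δ ^ μ / μ + (4 * M + V) * m⁻¹ * ω ^ (-(μ / ρ)) + M * δ ^ μ / μ := by
      linarith [hmiddle]
  _ = (2 / μ * M + (4 * M + V) * m⁻¹) * ω ^ (-(μ / ρ)) := by
      rw [hδμ]
      field_simp
      ring
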